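/- For the shifted Pareto-type model f_θ(x) = (x - θ + 1)^{-2} 1_{[θ,∞)}(x), one has, for θ < θ' with Δ = θ' - θ, h²(f_θ, f_{θ'}) = 1 - log(1 + Δ)/Δ, and consequently h²(f_θ, f_{θ'}) ≤ Δ/2. -/

import Mathlib

open MeasureTheory Real Set Filter

noncomputable def hSq (f g : ℝ → ℝ) : ℝ :=
  (1/2) * ∫ x : ℝ, (Real.sqrt (f x) - Real.sqrt (g x))^2

noncomputable def pareto (θ : ℝ) (x : ℝ) : ℝ :=
  if θ ≤ x then ((x - θ + 1)^2)⁻¹ else 0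

lemma sqrt_pareto_of_le {θ x : ℝ} (hx : θ ≤ x) :
    Real.sqrt (pareto θ x) = (x - θ + 1)⁻¹ := by
  have h1 : (0:ℝ) < x - θ + 1 := by linarith
  rw [pareto, if_pos hx, Real.sqrt_inv, Real.sqrt_sq h1.le]

lemma sqrt_pareto_of_lt {θ x : ℝ} (hx : x < θ) :
    Real.sqrt (pareto θ x) = 0 := by
  rw [pareto, if_neg (not_le.mpr hx), Real.sqrt_zero]

lemma measurable_pareto (θ : ℝ) : Measurable (pareto θ) := by
  unfold pareto
  exact Measurable.ite (measurableSet_le measurable_const measurable_id)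
    (by fun_prop) measurable_const

-- log lower bound: Δ - Δ²/2 ≤ log(1+Δ) for 0 < Δ
lemma log_lower (Δ : ℝ) (hΔ : 0 < Δ) : Δ - Δ^2/2 ≤ Real.log (1 + Δ) := by
  have h1 : (0:ℝ) < 1 := one_pos
  have h2 : (0:ℝ) < 1 + Δ := by linarith
  have key : ∫ x in (1:ℝ)..(1+Δ), x⁻¹ = Real.log (1 + Δ) := by
    rw [integral_inv_of_pos h1 h2]; simp
  have hmono : ∫ x in (1:ℝ)..(1+Δ), (2 - x) ≤ ∫ x in (1:ℝ)..(1+Δ), x⁻¹ := by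
    apply intervalIntegral.integral_mono_on (by linarith)
    · exact (continuous_const.sub continuous_id).intervalIntegrable _ _
    · apply ContinuousOn.intervalIntegrable
      apply ContinuousOn.inv₀ continuousOn_id
      intro x hx
      rw [uIcc_of_le (by linarith)] at hx
      exact ne_of_gt (by simp only [id_eq]; linarith [hx.1])
    · intro x hx
      have hx1 : 1 ≤ x := hx.1
      have hx0 : 0 < x := by linarith
      have h4 : (2-x)*x ≤ 1 := by nlinarith
      calc 2 - x = ((2-x)*x)*x⁻¹ := by field_simp
        _ ≤ 1 * x⁻¹ := mul_le_mul_of_nonneg_right h4 (inv_nonneg.mpr hx0.le)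
        _ = x⁻¹ := one_mul _
  have hval : ∫ x in (1:ℝ)..(1+Δ), (2 - x) = Δ - Δ^2/2 := by
    rw [intervalIntegral.integral_sub intervalIntegrable_const
      intervalIntegral.intervalIntegrable_id]
    simp [integral_id]
    ring
  linarith [hmono, key ▸ hmono]

theorem stmt6 (θ θ' : ℝ) (h : θ < θ') :
    hSq (pareto θ) (pareto θ') = 1 - Real.log (1 + (θ' - θ)) / (θ' - θ) ∧
      hSq (pareto θ) (pareto θ') ≤ (θ' - θ) / 2 := by
  set Δ := θ' - θ with hΔdef
  have hΔ : 0 < Δ := sub_pos.mpr h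
  have hΔne : Δ ≠ 0 := hΔ.ne'
  set F : ℝ → ℝ := fun x => (Real.sqrt (pareto θ x) - Real.sqrt (pareto θ' x))^2 with hF
  have hFm : Measurable F := by
    apply Measurable.pow_const
    exact ((measurable_pareto θ).sqrt.sub (measurable_pareto θ').sqrt)
  -- values of F
  have hF0 : ∀ x, x < θ → F x = 0 := by
    intro x hx
    simp [hF, sqrt_pareto_of_lt hx, sqrt_pareto_of_lt (hx.trans h)]
  have hFmid : ∀ x, θ ≤ x → x < θ' → F x = ((x - θ + 1)⁻¹)^2 := by
    intro x h1 h2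
    simp [hF, sqrt_pareto_of_le h1, sqrt_pareto_of_lt h2]
  have hFtop : ∀ x, θ' ≤ x → F x = ((x - θ + 1)⁻¹ - (x - θ' + 1)⁻¹)^2 := by
    intro x h2
    simp [hF, sqrt_pareto_of_le ((h.le).trans h2), sqrt_pareto_of_le h2]
  -- antiderivative on the tail
  set G : ℝ → ℝ := fun x => -(x - θ + 1)⁻¹ - (x - θ' + 1)⁻¹
      + (2/Δ) * (Real.log (x - θ + 1) - Real.log (x - θ' + 1)) with hG
  set g' : ℝ → ℝ := fun x => ((x - θ + 1)⁻¹ - (x - θ' + 1)⁻¹)^2 with hg'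
  have hGderiv : ∀ x ∈ Ici θ', HasDerivAt G (g' x) x := by
    intro x hx
    have hx' : θ' ≤ x := hx
    have hb : (0:ℝ) < x - θ' + 1 := by linarith
    have ha : (0:ℝ) < x - θ + 1 := by linarith
    have d1 : HasDerivAt (fun y : ℝ => y - θ + 1) 1 x := by
      simpa using ((hasDerivAt_id x).sub_const θ).add_const 1
    have d2 : HasDerivAt (fun y : ℝ => y - θ' + 1) 1 x := by
      simpa using ((hasDerivAt_id x).sub_const θ').add_const 1
    have i1 : HasDerivAt (fun y : ℝ => (y - θ + 1)⁻¹) (-1 / (x - θ + 1)^2) x := by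
      simpa [Pi.inv_def] using d1.inv ha.ne'
    have i2 : HasDerivAt (fun y : ℝ => (y - θ' + 1)⁻¹) (-1 / (x - θ' + 1)^2) x := by
      simpa [Pi.inv_def] using d2.inv hb.ne'
    have l1 : HasDerivAt (fun y : ℝ => Real.log (y - θ + 1)) (1 / (x - θ + 1)) x := by
      simpa using d1.log ha.ne'
    have l2 : HasDerivAt (fun y : ℝ => Real.log (y - θ' + 1)) (1 / (x - θ' + 1)) x := by
      simpa using d2.log hb.ne'
    have := (i1.neg.sub i2).add (((l1.sub l2)).const_mul (2/Δ))
    convert this using 1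
    · rfl
    · rfl
    · rfl
    simp only [hg']
    rw [hΔdef]
    field_simp [sub_ne_zero.mpr h.ne']
    ring
  have hg'nonneg : ∀ x ∈ Ioi θ', 0 ≤ g' x := fun x _ => sq_nonneg _
  have hGtend : Tendsto G atTop (nhds 0) := by
    have htop1 : Tendsto (fun x : ℝ => x - θ + 1) atTop atTop := by
      simp only [sub_eq_add_neg]
      exact tendsto_atTop_add_const_right _ 1 (tendsto_atTop_add_const_right _ (-θ) tendsto_id)
    have htop2 : Tendsto (fun x : ℝ => x - θ' + 1) atTop atTop := by
      simp only [sub_eq_add_neg]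
      exact tendsto_atTop_add_const_right _ 1 (tendsto_atTop_add_const_right _ (-θ') tendsto_id)
    have t1 : Tendsto (fun x : ℝ => (x - θ + 1)⁻¹) atTop (nhds 0) :=
      htop1.inv_tendsto_atTop
    have t2 : Tendsto (fun x : ℝ => (x - θ' + 1)⁻¹) atTop (nhds 0) :=
      htop2.inv_tendsto_atTop
    have hr : Tendsto (fun x : ℝ => 1 + Δ * (x - θ' + 1)⁻¹) atTop (nhds 1) := by
      simpa using tendsto_const_nhds.add (t2.const_mul Δ)
    have hlog1 : Tendsto (fun x : ℝ => Real.log (1 + Δ * (x - θ' + 1)⁻¹)) atTop (nhds 0) := by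
      have := (Real.continuousAt_log (by norm_num : (1:ℝ) ≠ 0)).tendsto.comp hr
      simpa [Function.comp_def] using this
    have hld : Tendsto (fun x : ℝ => Real.log (x - θ + 1) - Real.log (x - θ' + 1))
        atTop (nhds 0) := by
      apply hlog1.congr'
      filter_upwards [eventually_gt_atTop θ'] with x hx
      have hb : (0:ℝ) < x - θ' + 1 := by linarith
      have ha : (0:ℝ) < x - θ + 1 := by linarith
      rw [← Real.log_div ha.ne' hb.ne']
      congr 1
      rw [hΔdef]
      field_simp
      ring
    have := (t1.neg.sub t2).add (hld.const_mul (2/Δ))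
    simpa using this
  have htail : ∫ x in Ioi θ', F x = 1 + (1+Δ)⁻¹ - (2/Δ) * Real.log (1+Δ) := by
    rw [setIntegral_congr_fun measurableSet_Ioi
      (fun x hx => hFtop x (le_of_lt hx))]
    have := integral_Ioi_of_hasDerivAt_of_nonneg' hGderiv hg'nonneg hGtend
    rw [this]
    simp only [hG]
    have : θ' - θ' + 1 = (1:ℝ) := by ring
    rw [show θ' - θ + 1 = 1 + Δ by rw [hΔdef]; ring, this, Real.log_one]
    simp
    ring
  have htailInt : IntegrableOn g' (Ioi θ') := by
    exact integrableOn_Ioi_deriv_of_nonneg' hGderiv hg'nonneg hGtend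
  have htailIntF : IntegrableOn F (Ioi θ') := by
    apply htailInt.congr_fun (fun x hx => (hFtop x (le_of_lt hx)).symm) measurableSet_Ioi
  -- middle part
  have hmid : ∫ x in Ioc θ θ', F x = 1 - (1+Δ)⁻¹ := by
    have hae : ∀ᵐ x : ℝ, x ∈ Ioc θ θ' → F x = ((x - θ + 1)⁻¹)^2 := by
      have hne : ∀ᵐ x : ℝ, x ≠ θ' := by
        rw [MeasureTheory.ae_iff]
        simp only [not_not, setOf_eq_eq_singleton]
        exact measure_singleton θ'
      filter_upwards [hne] with x hx hmem
      exact hFmid x hmem.1.le (lt_of_le_of_ne hmem.2 hx)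
    rw [setIntegral_congr_ae measurableSet_Ioc hae,
      ← intervalIntegral.integral_of_le h.le]
    have : ∫ x in θ..θ', ((x - θ + 1)⁻¹)^2
        = (fun x => -(x - θ + 1)⁻¹) θ' - (fun x => -(x - θ + 1)⁻¹) θ := by
      apply intervalIntegral.integral_eq_sub_of_hasDerivAt
      · intro x hx
        rw [uIcc_of_le h.le] at hx
        have ha : (0:ℝ) < x - θ + 1 := by linarith [hx.1]
        have d1 : HasDerivAt (fun y : ℝ => y - θ + 1) 1 x := by
          simpa using ((hasDerivAt_id x).sub_const θ).add_const 1
        have := (d1.inv ha.ne').neg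
        convert this using 1
        · ext y; simp
        rw [neg_div, neg_neg, one_div, inv_pow]
      · apply ContinuousOn.intervalIntegrable
        apply ContinuousOn.pow
        apply ContinuousOn.inv₀ (by fun_prop)
        intro x hx
        rw [uIcc_of_le h.le] at hx
        have : (0:ℝ) < x - θ + 1 := by linarith [hx.1]
        exact this.ne'
    rw [this]
    simp
    rw [show θ' - θ + 1 = 1 + Δ by rw [hΔdef]; ring]
    ring
  have hmidIntF : IntegrableOn F (Ioc θ θ') := by
    refine ⟨hFm.aestronglyMeasurable.restrict, ?_⟩
    apply HasFiniteIntegral.restrict_of_bounded (C := 1) measure_Ioc_lt_top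
    apply ae_of_all
    intro x
    have h1 : 0 ≤ Real.sqrt (pareto θ x) := Real.sqrt_nonneg _
    have h2 : 0 ≤ Real.sqrt (pareto θ' x) := Real.sqrt_nonneg _
    have b1 : Real.sqrt (pareto θ x) ≤ 1 := by
      rcases le_or_gt θ x with hc | hc
      · rw [sqrt_pareto_of_le hc]
        rw [inv_le_one_iff₀]; right; linarith
      · rw [sqrt_pareto_of_lt hc]; norm_num
    have b2 : Real.sqrt (pareto θ' x) ≤ 1 := by
      rcases le_or_gt θ' x with hc | hc
      · rw [sqrt_pareto_of_le hc]
        rw [inv_le_one_iff₀]; right; linarith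
      · rw [sqrt_pareto_of_lt hc]; norm_num
    have : |Real.sqrt (pareto θ x) - Real.sqrt (pareto θ' x)| ≤ 1 := by
      rw [abs_le]; constructor <;> linarith
    calc ‖F x‖ = |Real.sqrt (pareto θ x) - Real.sqrt (pareto θ' x)|^2 := by
          rw [hF]; simp [sq_abs, abs_pow]
      _ ≤ 1^2 := by apply pow_le_pow_left₀ (abs_nonneg _) this
      _ = 1 := one_pow 2
  -- assemble
  have hsplit : ∫ x : ℝ, F x = (∫ x in Ioc θ θ', F x) + ∫ x in Ioi θ', F x := by
    rw [← setIntegral_eq_integral_of_forall_compl_eq_zero (s := Ici θ)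
      (fun x hx => hF0 x (by simpa using hx))]
    rw [integral_Ici_eq_integral_Ioi, ← Ioc_union_Ioi_eq_Ioi h.le]
    exact setIntegral_union (Ioc_disjoint_Ioi le_rfl) measurableSet_Ioi hmidIntF htailIntF
  have hmain : hSq (pareto θ) (pareto θ') = 1 - Real.log (1 + Δ) / Δ := by
    rw [hSq]
    show (1/2) * ∫ x : ℝ, F x = _
    rw [hsplit, hmid, htail]
    field_simp
    ring
  refine ⟨hmain, ?_⟩
  rw [hmain]
  have hlog := log_lower Δ hΔ
  have h2 : (Δ - Δ^2/2)/Δ ≤ Real.log (1 + Δ)/Δ := by gcongr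
  have h3 : (Δ - Δ^2/2)/Δ = 1 - Δ/2 := by field_simp
  linarith
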